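/- Let (B_t)_{t ≥ 0} be a standard one-dimensional Brownian motion. If f : [0, 1] → ℝ is continuous with f(0) = 0, then for every ε > 0, P( sup_{0 ≤ t ≤ 1} |B_t − f(t)| < ε ) > 0. -/

import Mathlib

open MeasureTheory ProbabilityTheory

/-- A standard one-dimensional Brownian motion on a probability space
`(Ω, P)`: it starts at `0`, has continuous sample paths, its increments over
`[s,t]` (for `0 ≤ s ≤ t`) are Gaussian with mean `0` and variance `t - s`,
and increments over disjoint consecutive intervals are independent. -/
structure IsBrownianMotion {Ω : Type*} [MeasurableSpace Ω] (P : Measure Ω)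
    (B : ℝ → Ω → ℝ) : Prop where
  isProbability : IsProbabilityMeasure P
  start : ∀ ω, B 0 ω = 0
  continuous_paths : ∀ ω, Continuous fun t => B t ω
  measurable : ∀ t, Measurable (B t)
  gaussian_increments : ∀ s t : ℝ, 0 ≤ s → s ≤ t →
    P.map (fun ω => B t ω - B s ω) = gaussianReal 0 (t - s).toNNReal
  indep_increments : ∀ (n : ℕ) (τ : ℕ → ℝ), Monotone τ → (∀ i, 0 ≤ τ i) →
    iIndepFun
      (fun i : Fin n => fun ω => B (τ (i + 1)) ω - B (τ i) ω) P

set_option maxHeartbeats 1000000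

namespace BMSupport

/-- Uniform grid starting at `c` with mesh `h`. -/
noncomputable def grid (c h : ℝ) (j : ℕ) : ℝ := c + j * h

lemma grid_monotone {c h : ℝ} (hh : 0 ≤ h) : Monotone (grid c h) := fun a b hab => by
  unfold grid
  have : (a : ℝ) ≤ b := Nat.cast_le.mpr hab
  nlinarith

lemma grid_nonneg {c h : ℝ} (hc : 0 ≤ c) (hh : 0 ≤ h) (j : ℕ) : 0 ≤ grid c h j := by
  unfold grid; positivity

variable {Ω : Type*} [MeasurableSpace Ω] {P : Measure Ω} {B : ℝ → Ω → ℝ}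

lemma meas_inc (hB : IsBrownianMotion P B) (s t : ℝ) :
    Measurable (fun ω => B t ω - B s ω) := (hB.measurable t).sub (hB.measurable s)

lemma prob_inc_mem (hB : IsBrownianMotion P B) {s t : ℝ} (hs : 0 ≤ s) (hst : s ≤ t)
    {S : Set ℝ} (hS : MeasurableSet S) :
    P {ω | B t ω - B s ω ∈ S} = gaussianReal 0 (t - s).toNNReal S := by
  have h1 := hB.gaussian_increments s t hs hst
  have h2 : P.map (fun ω => B t ω - B s ω) S = gaussianReal 0 (t - s).toNNReal S := by
    rw [h1]
  rwa [Measure.map_apply (meas_inc hB s t) hS] at h2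

lemma incs_indep (hB : IsBrownianMotion P B) (c h : ℝ) (hc : 0 ≤ c) (hh : 0 ≤ h) (N : ℕ) :
    iIndepFun
      (fun l : Fin N => fun ω => B (grid c h ((l : ℕ) + 1)) ω - B (grid c h (l : ℕ)) ω) P :=
  hB.indep_increments N (grid c h) (grid_monotone hh) (grid_nonneg hc hh)

lemma sum_inc (c h : ℝ) (j : ℕ) (ω : Ω) :
    ∀ k : ℕ, ∑ l ∈ Finset.range k,
        (B (grid c h (j + l + 1)) ω - B (grid c h (j + l)) ω)
      = B (grid c h (j + k)) ω - B (grid c h j) ω := by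
  intro k
  induction k with
  | zero => simp
  | succ k ih =>
    rw [Finset.sum_range_succ, ih]
    have : j + (k + 1) = j + k + 1 := by ring
    rw [this]
    ring

/-- The block-product formula: events depending on the increments in disjoint blocks
of a uniform grid have multiplicative probabilities. -/
lemma block_prod (hB : IsBrownianMotion P B) (c h : ℝ) (hc : 0 ≤ c) (hh : 0 ≤ h)
    (n M : ℕ) (hM : 0 < M) (T : Fin n → Set (Fin M → ℝ)) (hT : ∀ i, MeasurableSet (T i)) :
    P (⋂ i : Fin n, {ω | (fun k : Fin M =>
        B (grid c h ((i : ℕ) * M + (k : ℕ) + 1)) ω - B (grid c h ((i : ℕ) * M + (k : ℕ))) ω) ∈ T i})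
      = ∏ i : Fin n, P {ω | (fun k : Fin M =>
        B (grid c h ((i : ℕ) * M + (k : ℕ) + 1)) ω - B (grid c h ((i : ℕ) * M + (k : ℕ))) ω ) ∈ T i} := by
  classical
  have hprob := hB.isProbability
  set N := n * M with hN
  set X : Fin N → Ω → ℝ :=
    fun l ω => B (grid c h ((l : ℕ) + 1)) ω - B (grid c h (l : ℕ)) ω with hX
  have hXm : ∀ l, Measurable (X l) := fun l => meas_inc hB _ _
  have hXi : iIndepFun X P := incs_indep hB c h hc hh N
  have hlt : ∀ (i : Fin n) (k : Fin M), (i : ℕ) * M + (k : ℕ) < N := by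
    intro i k
    calc (i : ℕ) * M + (k : ℕ) < (i : ℕ) * M + M := by omega
    _ = ((i : ℕ) + 1) * M := by ring
    _ ≤ n * M := Nat.mul_le_mul_right M i.2
  set emb : Fin n → Fin M → Fin N := fun i k => ⟨(i : ℕ) * M + (k : ℕ), hlt i k⟩ with hemb
  set S : Fin n → Finset (Fin N) := fun i => Finset.image (emb i) Finset.univ with hS
  have hmemS : ∀ (i : Fin n) (k : Fin M), emb i k ∈ S i :=
    fun i k => Finset.mem_image_of_mem _ (Finset.mem_univ k)
  set C : Fin n → Set Ω := fun i => {ω | (fun k : Fin M => X (emb i k) ω) ∈ T i} with hC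
  have hSdisj : ∀ i j : Fin n, i ≠ j → Disjoint (S i) (S j) := by
    intro i j hij
    rw [Finset.disjoint_left]
    intro l hli hlj
    obtain ⟨k, -, rfl⟩ := Finset.mem_image.mp hli
    obtain ⟨k', -, he⟩ := Finset.mem_image.mp hlj
    have hv : (j : ℕ) * M + (k' : ℕ) = (i : ℕ) * M + (k : ℕ) := congrArg Fin.val he
    have hdiv : ∀ (a : ℕ) (b : Fin M), ((a * M + (b : ℕ)) / M) = a := by
      intro a b
      rw [mul_comm, Nat.mul_add_div hM, Nat.div_eq_of_lt b.2, add_zero]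
    have : (j : ℕ) = (i : ℕ) := by
      have h1 := hdiv (j : ℕ) k'
      have h2 := hdiv (i : ℕ) k
      rw [hv] at h1; omega
    exact hij (Fin.ext this.symm)
  have key : ∀ s : Finset (Fin n), P (⋂ i ∈ s, C i) = ∏ i ∈ s, P (C i) := by
    intro s
    induction s using Finset.induction_on with
    | empty => simp
    | @insert a s' ha ih =>
      set U : Finset (Fin N) := s'.biUnion S with hU
      have hmemU : ∀ j ∈ s', ∀ k : Fin M, emb j k ∈ U :=
        fun j hj k => Finset.mem_biUnion.mpr ⟨j, hj, hmemS j k⟩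
      have hdisjU : Disjoint (S a) U := by
        rw [Finset.disjoint_biUnion_right]
        intro j hj
        exact hSdisj a j (fun he => ha (he ▸ hj))
      -- reindexing maps
      set ρa : (↥(S a) → ℝ) → (Fin M → ℝ) := fun g k => g ⟨emb a k, hmemS a k⟩ with hρa
      have hρameas : Measurable ρa :=
        measurable_pi_lambda _ (fun k => measurable_pi_apply _)
      set ρ : Fin n → (↥U → ℝ) → (Fin M → ℝ) :=
        fun j g k => if hjk : emb j k ∈ U then g ⟨emb j k, hjk⟩ else 0 with hρ
      have hρmeas : ∀ j, Measurable (ρ j) := by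
        intro j
        apply measurable_pi_lambda
        intro k
        by_cases hjk : emb j k ∈ U
        · simp only [hρ, dif_pos hjk]
          exact measurable_pi_apply _
        · simp only [hρ, dif_neg hjk]
          exact measurable_const
      have hCa : C a = (fun ω (l : ↥(S a)) => X l ω) ⁻¹' (ρa ⁻¹' (T a)) := rfl
      have hR : (⋂ j ∈ s', C j) = (fun ω (l : ↥U) => X l ω) ⁻¹' (⋂ j ∈ s', ρ j ⁻¹' T j) := by
        ext ω
        simp only [Set.mem_iInter, Set.mem_preimage]
        refine forall_congr' fun j => forall_congr' fun hj => ?_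
        have hrw : ρ j (fun (l : ↥U) => X l ω) = fun k => X (emb j k) ω := by
          funext k
          simp only [hρ, dif_pos (hmemU j hj k)]
        rw [hrw]
        rfl
      have hIF : IndepFun (fun ω (l : ↥(S a)) => X l ω) (fun ω (l : ↥U) => X l ω) P :=
        hXi.indepFun_finset (S a) U hdisjU hXm
      have hVmeas : MeasurableSet (⋂ j ∈ s', ρ j ⁻¹' T j) :=
        MeasurableSet.biInter s'.countable_toSet (fun j _ => hρmeas j (hT j))
      have hprodstep := hIF.measure_inter_preimage_eq_mul (ρa ⁻¹' T a)
        (⋂ j ∈ s', ρ j ⁻¹' T j) (hρameas (hT a)) hVmeas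
      calc P (⋂ i ∈ insert a s', C i) = P (C a ∩ ⋂ j ∈ s', C j) := by
            rw [Finset.set_biInter_insert]
        _ = P (C a) * P (⋂ j ∈ s', C j) := by rw [hCa, hR]; exact hprodstep
        _ = ∏ i ∈ insert a s', P (C i) := by rw [ih, Finset.prod_insert ha]
  have huniv := key Finset.univ
  have h1 : (⋂ i ∈ (Finset.univ : Finset (Fin n)), C i) = ⋂ i : Fin n, C i := by
    ext ω; simp
  rw [h1, Finset.prod_congr rfl (fun i _ => rfl)] at huniv
  exact huniv

end BMSupport

set_option linter.unusedSectionVars false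

namespace BMSupport

variable {Ω : Type*} [MeasurableSpace Ω] {P : Measure Ω} {B : ℝ → Ω → ℝ}

variable (B) in
/-- Dyadic-level block event. -/
def blockE (a δ r d η : ℝ) (K : ℕ) : Set Ω :=
  {ω | (∀ k : ℕ, k ≤ 2 ^ K → |B (a + (k : ℝ) * (δ / 2 ^ K)) ω - B a ω| ≤ r) ∧
       |B (a + δ) ω - B a ω - d| ≤ η}

variable (B) in
/-- Path-level block event. -/
def blockF (a δ r d η : ℝ) : Set Ω :=
  {ω | (∀ u ∈ Set.Icc a (a + δ), |B u ω - B a ω| ≤ r) ∧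
       |B (a + δ) ω - B a ω - d| ≤ η}

lemma blockE_measurable (hB : IsBrownianMotion P B) (a δ r d η : ℝ) (K : ℕ) :
    MeasurableSet (blockE B a δ r d η K) := by
  have h1 : blockE B a δ r d η K =
      (⋂ k : ℕ, ⋂ (_ : k ≤ 2 ^ K), {ω | |B (a + (k : ℝ) * (δ / 2 ^ K)) ω - B a ω| ≤ r}) ∩
        {ω | |B (a + δ) ω - B a ω - d| ≤ η} := by
    ext ω
    simp [blockE, Set.mem_iInter]
  rw [h1]
  refine MeasurableSet.inter (MeasurableSet.iInter fun k => MeasurableSet.iInter fun _ => ?_) ?_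
  · exact measurableSet_le ((meas_inc hB _ _).abs) measurable_const
  · exact measurableSet_le (((meas_inc hB _ _).sub_const d).abs) measurable_const

/-- Dyadic points approximate any point of the interval. -/
lemma dyadic_dense {a δ u ρ : ℝ} (hδ : 0 < δ) (hu : u ∈ Set.Icc a (a + δ)) (hρ : 0 < ρ) :
    ∃ (K k : ℕ), k ≤ 2 ^ K ∧ |a + (k : ℝ) * (δ / 2 ^ K) - u| ≤ ρ := by
  obtain ⟨K, hK⟩ := pow_unbounded_of_one_lt (δ / ρ) (by norm_num : (1:ℝ) < 2)
  have h2K : (0:ℝ) < 2 ^ K := by positivity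
  have hmesh : δ / 2 ^ K < ρ := by
    rw [div_lt_iff₀ h2K]
    rw [div_lt_iff₀ hρ] at hK
    nlinarith
  set h' : ℝ := δ / 2 ^ K with hh'
  have hh'pos : 0 < h' := by positivity
  obtain ⟨hua, hub⟩ := hu
  set k : ℕ := ⌊(u - a) / h'⌋₊ with hk
  refine ⟨K, k, ?_, ?_⟩
  · have h1 : (u - a) / h' ≤ ((2 ^ K : ℕ) : ℝ) := by
      push_cast
      rw [div_le_iff₀ hh'pos, hh']
      have : (2:ℝ)^K * (δ / 2 ^ K) = δ := by field_simp
      nlinarith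
    calc k ≤ ⌊((2 ^ K : ℕ) : ℝ)⌋₊ := Nat.floor_le_floor h1
      _ = 2 ^ K := Nat.floor_natCast _
  · have hnn : 0 ≤ (u - a) / h' := div_nonneg (by linarith) hh'pos.le
    have hfl : (k : ℝ) ≤ (u - a) / h' := Nat.floor_le hnn
    have hfu : (u - a) / h' < k + 1 := Nat.lt_floor_add_one _
    have hfl' : (k : ℝ) * h' ≤ u - a := by
      rw [le_div_iff₀ hh'pos] at hfl; linarith
    have hfu' : u - a < ((k : ℝ) + 1) * h' := by
      rw [div_lt_iff₀ hh'pos] at hfu; nlinarith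
    rw [abs_le]
    constructor
    · nlinarith
    · nlinarith

lemma approx (hB : IsBrownianMotion P B) (ω : Ω) {a δ u y : ℝ} (hδ : 0 < δ)
    (hu : u ∈ Set.Icc a (a + δ)) (hy : y < |B u ω - B a ω|) :
    ∃ (K k : ℕ), k ≤ 2 ^ K ∧ y < |B (a + (k : ℝ) * (δ / 2 ^ K)) ω - B a ω| := by
  have hg : Continuous (fun t => |B t ω - B a ω|) :=
    ((hB.continuous_paths ω).sub continuous_const).abs
  have hO : IsOpen {t : ℝ | y < |B t ω - B a ω|} := isOpen_lt continuous_const hg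
  obtain ⟨ρ, hρ, hball⟩ := Metric.isOpen_iff.mp hO u hy
  obtain ⟨K, k, hk, hd⟩ := dyadic_dense hδ hu (half_pos hρ)
  refine ⟨K, k, hk, ?_⟩
  have : a + (k : ℝ) * (δ / 2 ^ K) ∈ Metric.ball u ρ := by
    rw [Metric.mem_ball, Real.dist_eq]
    calc |a + (k : ℝ) * (δ / 2 ^ K) - u| ≤ ρ / 2 := hd
      _ < ρ := half_lt_self hρ
  exact hball this

lemma iInter_blockE (hB : IsBrownianMotion P B) {a δ : ℝ} (hδ : 0 < δ) (r d η : ℝ) :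
    ⋂ K : ℕ, blockE B a δ r d η K = blockF B a δ r d η := by
  ext ω
  simp only [Set.mem_iInter]
  constructor
  · rintro h
    refine ⟨?_, (h 0).2⟩
    intro u hu
    by_contra hru
    push_neg at hru
    obtain ⟨K, k, hk, hgt⟩ := approx hB ω hδ hu hru
    exact absurd ((h K).1 k hk) (not_le.mpr hgt)
  · rintro ⟨h1, h2⟩ K
    refine ⟨fun k hk => h1 _ ?_, h2⟩
    have h2K : (0:ℝ) < 2 ^ K := by positivity
    have hkle : (k : ℝ) ≤ 2 ^ K := by
      calc (k : ℝ) ≤ ((2 ^ K : ℕ) : ℝ) := Nat.cast_le.mpr hk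
        _ = 2 ^ K := by push_cast; ring
    constructor
    · nlinarith [mul_nonneg (Nat.cast_nonneg (α := ℝ) k) (le_of_lt (div_pos hδ h2K))]
    · have : (k : ℝ) * (δ / 2 ^ K) ≤ 2 ^ K * (δ / 2 ^ K) := by
        apply mul_le_mul_of_nonneg_right hkle (le_of_lt (div_pos hδ h2K))
      have heq : (2:ℝ) ^ K * (δ / 2 ^ K) = δ := by field_simp
      nlinarith

lemma blockE_antitone {a δ r d η : ℝ} (hδ : 0 < δ) :
    ∀ K K' : ℕ, K ≤ K' → blockE B a δ r d η K' ⊆ blockE B a δ r d η K := by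
  intro K K' hKK ω hω
  refine ⟨?_, hω.2⟩
  intro k hk
  have key : a + (k : ℝ) * (δ / 2 ^ K) = a + ((k * 2 ^ (K' - K) : ℕ) : ℝ) * (δ / 2 ^ K') := by
    have h2K : (2:ℝ) ^ K ≠ 0 := by positivity
    have h2K' : (2:ℝ) ^ K' ≠ 0 := by positivity
    have hsplit : (2:ℝ) ^ K' = 2 ^ K * 2 ^ (K' - K) := by
      rw [← pow_add]
      congr 1
      omega
    push_cast
    rw [hsplit]
    field_simp
  rw [key]
  apply hω.1
  calc k * 2 ^ (K' - K) ≤ 2 ^ K * 2 ^ (K' - K) := Nat.mul_le_mul_right _ hk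
    _ = 2 ^ K' := by rw [← pow_add]; congr 1; omega

end BMSupport

namespace BMSupport

variable {Ω : Type*} [MeasurableSpace Ω] {P : Measure Ω} {B : ℝ → Ω → ℝ}

/-- Partial sums of a finite tuple. -/
noncomputable def pSum {M : ℕ} (g : Fin M → ℝ) (k : ℕ) : ℝ :=
  ∑ l ∈ Finset.range k, if h : l < M then g ⟨l, h⟩ else 0

lemma measurable_pSum {M : ℕ} (k : ℕ) : Measurable (fun g : Fin M → ℝ => pSum g k) := by
  apply Finset.measurable_sum
  intro l _
  by_cases h : l < M
  · simp only [dif_pos h]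
    exact measurable_pi_apply _
  · simp only [dif_neg h]
    exact measurable_const

/-- The product lower bound for path-level block events. -/
lemma blocks_prod (hB : IsBrownianMotion P B) (s δ : ℝ) (hs : 0 ≤ s) (hδ : 0 < δ)
    (n : ℕ) (r d η : Fin n → ℝ) :
    ∏ i : Fin n, P (blockF B (s + (i : ℕ) * δ) δ (r i) (d i) (η i))
      ≤ P (⋂ i : Fin n, blockF B (s + (i : ℕ) * δ) δ (r i) (d i) (η i)) := by
  have hprob := hB.isProbability
  -- rewrite each blockF as an intersection of dyadic block events
  have hbF : ∀ i : Fin n, blockF B (s + (i : ℕ) * δ) δ (r i) (d i) (η i)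
      = ⋂ K : ℕ, blockE B (s + (i : ℕ) * δ) δ (r i) (d i) (η i) K :=
    fun i => (iInter_blockE hB hδ _ _ _).symm
  -- for each level K, identify blockE with a block event of the uniform grid
  have hlevel : ∀ (K : ℕ) (i : Fin n),
      blockE B (s + (i : ℕ) * δ) δ (r i) (d i) (η i) K
        = {ω | (fun k : Fin (2 ^ K) =>
            B (grid s (δ / 2 ^ K) ((i : ℕ) * 2 ^ K + (k : ℕ) + 1)) ω
              - B (grid s (δ / 2 ^ K) ((i : ℕ) * 2 ^ K + (k : ℕ))) ω)
            ∈ {g : Fin (2 ^ K) → ℝ |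
                (∀ k : ℕ, k ≤ 2 ^ K → |pSum g k| ≤ r i) ∧ |pSum g (2 ^ K) - d i| ≤ η i}} := by
    intro K i
    have h2K : (0:ℝ) < 2 ^ K := by positivity
    have hgrid : ∀ k : ℕ, grid s (δ / 2 ^ K) ((i : ℕ) * 2 ^ K + k)
        = (s + (i : ℕ) * δ) + (k : ℝ) * (δ / 2 ^ K) := by
      intro k
      unfold grid
      push_cast
      field_simp
      ring
    have hps : ∀ (ω : Ω) (k : ℕ), k ≤ 2 ^ K →
        pSum (fun k' : Fin (2 ^ K) =>
            B (grid s (δ / 2 ^ K) ((i : ℕ) * 2 ^ K + (k' : ℕ) + 1)) ω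
              - B (grid s (δ / 2 ^ K) ((i : ℕ) * 2 ^ K + (k' : ℕ))) ω) k
          = B ((s + (i : ℕ) * δ) + (k : ℝ) * (δ / 2 ^ K)) ω - B (s + (i : ℕ) * δ) ω := by
      intro ω k hk
      unfold pSum
      have hterm : ∀ l ∈ Finset.range k,
          (if h : l < 2 ^ K then
            B (grid s (δ / 2 ^ K) ((i : ℕ) * 2 ^ K + (l : ℕ) + 1)) ω
              - B (grid s (δ / 2 ^ K) ((i : ℕ) * 2 ^ K + (l : ℕ))) ω
          else 0)
          = B (grid s (δ / 2 ^ K) ((i : ℕ) * 2 ^ K + l + 1)) ω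
              - B (grid s (δ / 2 ^ K) ((i : ℕ) * 2 ^ K + l)) ω := by
        intro l hl
        have : l < 2 ^ K := lt_of_lt_of_le (Finset.mem_range.mp hl) hk
        rw [dif_pos this]
      rw [Finset.sum_congr rfl hterm, sum_inc, hgrid k]
      have h0 : grid s (δ / 2 ^ K) ((i : ℕ) * 2 ^ K) = s + (i : ℕ) * δ := by
        have := hgrid 0
        simpa using this
      rw [h0]
    ext ω
    simp only [blockE, Set.mem_setOf_eq]
    constructor
    · rintro ⟨h1, h2⟩
      constructor
      · intro k hk
        rw [hps ω k hk]
        exact h1 k hk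
      · rw [hps ω (2 ^ K) le_rfl]
        have : ((2 ^ K : ℕ) : ℝ) * (δ / 2 ^ K) = δ := by push_cast; field_simp
        rw [this]
        exact h2
    · rintro ⟨h1, h2⟩
      constructor
      · intro k hk
        have := h1 k hk
        rwa [hps ω k hk] at this
      · have := h2
        rw [hps ω (2 ^ K) le_rfl] at this
        have heq : ((2 ^ K : ℕ) : ℝ) * (δ / 2 ^ K) = δ := by push_cast; field_simp
        rwa [heq] at this
  -- measurability of the tuple sets
  have hTmeas : ∀ (K : ℕ) (i : Fin n), MeasurableSet {g : Fin (2 ^ K) → ℝ |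
      (∀ k : ℕ, k ≤ 2 ^ K → |pSum g k| ≤ r i) ∧ |pSum g (2 ^ K) - d i| ≤ η i} := by
    intro K i
    have : {g : Fin (2 ^ K) → ℝ |
        (∀ k : ℕ, k ≤ 2 ^ K → |pSum g k| ≤ r i) ∧ |pSum g (2 ^ K) - d i| ≤ η i}
      = (⋂ k : ℕ, ⋂ (_ : k ≤ 2 ^ K), {g | |pSum g k| ≤ r i}) ∩ {g | |pSum g (2 ^ K) - d i| ≤ η i} := by
      ext g; simp [Set.mem_iInter]
    rw [this]
    refine MeasurableSet.inter (MeasurableSet.iInter fun k => MeasurableSet.iInter fun _ => ?_) ?_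
    · exact measurableSet_le (measurable_pSum k).abs measurable_const
    · exact measurableSet_le ((measurable_pSum _).sub_const _).abs measurable_const
  -- product formula at each dyadic level
  have hlevelprod : ∀ K : ℕ,
      P (⋂ i : Fin n, blockE B (s + (i : ℕ) * δ) δ (r i) (d i) (η i) K)
        = ∏ i : Fin n, P (blockE B (s + (i : ℕ) * δ) δ (r i) (d i) (η i) K) := by
    intro K
    have := block_prod hB s (δ / 2 ^ K) hs (by positivity) n (2 ^ K) (pow_pos two_pos K)
      (fun i => {g : Fin (2 ^ K) → ℝ |
        (∀ k : ℕ, k ≤ 2 ^ K → |pSum g k| ≤ r i) ∧ |pSum g (2 ^ K) - d i| ≤ η i})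
      (fun i => hTmeas K i)
    calc P (⋂ i : Fin n, blockE B (s + (i : ℕ) * δ) δ (r i) (d i) (η i) K)
        = P (⋂ i : Fin n, {ω | _ ∈ _}) := by rw [Set.iInter_congr (hlevel K)]
      _ = ∏ i : Fin n, P {ω | _ ∈ _} := this
      _ = ∏ i : Fin n, P (blockE B (s + (i : ℕ) * δ) δ (r i) (d i) (η i) K) := by
          exact Finset.prod_congr rfl (fun i _ => by rw [hlevel K i])
  -- continuity from above
  have hmono : ∀ K K' : ℕ, K ≤ K' →
      (⋂ i : Fin n, blockE B (s + (i : ℕ) * δ) δ (r i) (d i) (η i) K')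
        ⊆ ⋂ i : Fin n, blockE B (s + (i : ℕ) * δ) δ (r i) (d i) (η i) K := by
    intro K K' hKK'
    exact Set.iInter_mono fun i => blockE_antitone hδ K K' hKK'
  have hiInter : P (⋂ i : Fin n, blockF B (s + (i : ℕ) * δ) δ (r i) (d i) (η i))
      = ⨅ K : ℕ, P (⋂ i : Fin n, blockE B (s + (i : ℕ) * δ) δ (r i) (d i) (η i) K) := by
    have h1 : (⋂ i : Fin n, blockF B (s + (i : ℕ) * δ) δ (r i) (d i) (η i))
        = ⋂ K : ℕ, ⋂ i : Fin n, blockE B (s + (i : ℕ) * δ) δ (r i) (d i) (η i) K := by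
      rw [Set.iInter_congr hbF, Set.iInter_comm]
    rw [h1]
    apply Directed.measure_iInter
    · exact fun K => ((MeasurableSet.iInter fun i => blockE_measurable hB _ _ _ _ _ K)).nullMeasurableSet
    · intro K K'
      exact ⟨max K K', hmono K (max K K') (le_max_left _ _), hmono K' (max K K') (le_max_right _ _)⟩
    · exact ⟨0, measure_ne_top P _⟩
  rw [hiInter]
  refine le_iInf fun K => ?_
  rw [hlevelprod K]
  apply Finset.prod_le_prod' 
  intro i _
  apply measure_mono
  rw [hbF i]
  exact Set.iInter_subset _ K

end BMSupport

namespace BMSupport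
open Real
open scoped NNReal ENNReal

lemma gauss_Ici (v : ℝ≥0) : 1/2 ≤ gaussianReal 0 v (Set.Ici 0) := by
  by_cases hv : v = 0
  · subst hv
    rw [gaussianReal_zero_var, Measure.dirac_apply' _ measurableSet_Ici]
    simp [Set.indicator_of_mem (Set.self_mem_Ici (a := (0:ℝ)))]
  · have hmap := gaussianReal_map_const_mul (μ := 0) (v := v) (-1)
    have hv2 : (.mk ((-1:ℝ)^2) (sq_nonneg _) : ℝ≥0) = 1 := by
      ext; norm_num
    rw [hv2, one_mul, mul_zero] at hmap
    have hsym : gaussianReal 0 v (Set.Iic 0) = gaussianReal 0 v (Set.Ici 0) := by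
      have hm : Measurable fun x : ℝ => -1 * x := by fun_prop
      conv_rhs => rw [← hmap]
      rw [Measure.map_apply hm measurableSet_Ici]
      congr 1
      ext y
      simp only [Set.mem_preimage, Set.mem_Ici, Set.mem_Iic]
      constructor <;> intro h <;> nlinarith
    have hcover : (1 : ℝ≥0∞) ≤ gaussianReal 0 v (Set.Ici 0) + gaussianReal 0 v (Set.Iic 0) := by
      have huniv : (Set.univ : Set ℝ) = Set.Ici 0 ∪ Set.Iic 0 := by
        ext y; simp [le_total]
      calc (1:ℝ≥0∞) = gaussianReal 0 v Set.univ := by simp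
        _ = gaussianReal 0 v (Set.Ici 0 ∪ Set.Iic 0) := by rw [huniv]
        _ ≤ _ := measure_union_le _ _
    rw [hsym] at hcover
    rw [ENNReal.div_le_iff (by norm_num) (by norm_num)]
    calc (1:ℝ≥0∞) ≤ gaussianReal 0 v (Set.Ici 0) + gaussianReal 0 v (Set.Ici 0) := hcover
      _ = gaussianReal 0 v (Set.Ici 0) * 2 := by ring

lemma gauss_tail (v : ℝ≥0) (hv : v ≠ 0) (x : ℝ) (hx : 0 ≤ x) :
    gaussianReal 0 v {y | x ≤ |y|} ≤ ENNReal.ofReal (Real.sqrt 2 * Real.exp (-x^2/(4*v))) := by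
  have hvpos : (0:ℝ) < v := NNReal.coe_pos.mpr (pos_iff_ne_zero.mpr hv)
  have h2pv : (0:ℝ) < 2*π*v := by nlinarith [pi_pos]
  have h4v : (0:ℝ) < 4*(v:ℝ) := by nlinarith
  have hsq : (0:ℝ) < Real.sqrt (2*π*v) := Real.sqrt_pos.mpr h2pv
  rw [gaussianReal_apply 0 hv]
  have hle : ∀ y ∈ {y : ℝ | x ≤ |y|}, gaussianPDF 0 v y ≤
      ENNReal.ofReal (((Real.sqrt (2*π*v))⁻¹ * Real.exp (-x^2/(4*v))) * Real.exp (-(1/(4*v)) * y^2)) := by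
    intro y hy
    rw [gaussianPDF, gaussianPDFReal]
    apply ENNReal.ofReal_le_ofReal
    have hy2 : x^2 ≤ y^2 := by
      have h1 : x ≤ |y| := hy
      calc x^2 ≤ |y|^2 := by nlinarith [abs_nonneg y]
        _ = y^2 := sq_abs y
    have hexp : Real.exp (-(y-0)^2/(2*v)) ≤ Real.exp (-x^2/(4*v)) * Real.exp (-(1/(4*v)) * y^2) := by
      rw [← Real.exp_add]
      apply Real.exp_le_exp.mpr
      rw [sub_zero]
      have : -(y^2)/(2*(v:ℝ)) = -x^2/(4*v) + (-(1/(4*v)) * y^2) + (x^2 - y^2)/(4*v) := by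
        field_simp
        ring
      rw [this]
      have : (x^2 - y^2)/(4*(v:ℝ)) ≤ 0 := by
        apply div_nonpos_of_nonpos_of_nonneg <;> nlinarith
      linarith
    calc (Real.sqrt (2*π*v))⁻¹ * Real.exp (-(y-0)^2/(2*v))
        ≤ (Real.sqrt (2*π*v))⁻¹ * (Real.exp (-x^2/(4*v)) * Real.exp (-(1/(4*v)) * y^2)) := by
          apply mul_le_mul_of_nonneg_left hexp (by positivity)
      _ = _ := by ring
  calc ∫⁻ y in {y : ℝ | x ≤ |y|}, gaussianPDF 0 v y
      ≤ ∫⁻ y in {y : ℝ | x ≤ |y|}, ENNReal.ofReal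
          (((Real.sqrt (2*π*v))⁻¹ * Real.exp (-x^2/(4*v))) * Real.exp (-(1/(4*v)) * y^2)) :=
        setLIntegral_mono (by measurability) hle
    _ ≤ ∫⁻ y, ENNReal.ofReal
          (((Real.sqrt (2*π*v))⁻¹ * Real.exp (-x^2/(4*v))) * Real.exp (-(1/(4*v)) * y^2)) :=
        setLIntegral_le_lintegral _ _
    _ = ENNReal.ofReal (∫ y : ℝ, ((Real.sqrt (2*π*v))⁻¹ * Real.exp (-x^2/(4*v))) * Real.exp (-(1/(4*v)) * y^2)) := by
        rw [ofReal_integral_eq_lintegral_ofReal]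
        · exact (Integrable.const_mul (by simpa using integrable_exp_neg_mul_sq (by positivity : (0:ℝ) < 1/(4*(v:ℝ)))) _)
        · filter_upwards with y
          positivity
    _ ≤ ENNReal.ofReal (Real.sqrt 2 * Real.exp (-x^2/(4*v))) := by
        apply ENNReal.ofReal_le_ofReal
        rw [integral_const_mul]
        have hing : ∫ y : ℝ, Real.exp (-(1/(4*(v:ℝ))) * y^2) = Real.sqrt (π / (1/(4*v))) := by
          simpa using integral_gaussian (1/(4*(v:ℝ)))
        rw [hing]
        have h1 : Real.sqrt (π / (1/(4*(v:ℝ)))) = Real.sqrt 2 * Real.sqrt (2*π*v) := by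
          rw [← Real.sqrt_mul (by norm_num : (0:ℝ) ≤ 2)]
          congr 1
          field_simp
          ring
        rw [h1]
        apply le_of_eq
        have hne : Real.sqrt (2*π*(v:ℝ)) ≠ 0 := ne_of_gt hsq
        field_simp

lemma gauss_interval (v : ℝ≥0) (hv : v ≠ 0) (d l : ℝ) (hl : 0 ≤ l) :
    ENNReal.ofReal ((2*l) * ((Real.sqrt (2*π*v))⁻¹ * Real.exp (-(|d|+l)^2/(2*v))))
      ≤ gaussianReal 0 v {y | |y - d| ≤ l} := by
  have hvpos : (0:ℝ) < v := NNReal.coe_pos.mpr (pos_iff_ne_zero.mpr hv)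
  have h2pv : (0:ℝ) < 2*π*v := by nlinarith [pi_pos]
  have h2v : (0:ℝ) < 2*(v:ℝ) := by nlinarith
  have hS : {y : ℝ | |y - d| ≤ l} = Set.Icc (d - l) (d + l) := by
    ext y
    rw [Set.mem_setOf_eq, abs_le, Set.mem_Icc]
    constructor <;> intro h <;> constructor <;> linarith [h.1, h.2]
  rw [hS, gaussianReal_apply 0 hv]
  have hle : ∀ y ∈ Set.Icc (d - l) (d + l),
      ENNReal.ofReal ((Real.sqrt (2*π*v))⁻¹ * Real.exp (-(|d|+l)^2/(2*v))) ≤ gaussianPDF 0 v y := by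
    intro y hy
    rw [gaussianPDF, gaussianPDFReal]
    apply ENNReal.ofReal_le_ofReal
    apply mul_le_mul_of_nonneg_left _ (by positivity)
    apply Real.exp_le_exp.mpr
    rw [sub_zero]
    have hyb : |y| ≤ |d| + l := by
      have h0 : y - d + d = y := sub_add_cancel y d
      have hmem := hy
      rw [Set.mem_Icc] at hmem
      have h2 : |y - d| ≤ l := by rw [abs_le]; constructor <;> linarith [hmem.1, hmem.2]
      calc |y| = |(y - d) + d| := by rw [h0]
        _ ≤ |y - d| + |d| := abs_add_le _ _
        _ ≤ l + |d| := by linarith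
        _ = |d| + l := by ring
    have hsqle : y^2 ≤ (|d| + l)^2 := by
      nlinarith [abs_nonneg y, sq_abs y]
    have : -(|d|+l)^2 ≤ -y^2 := by linarith
    exact div_le_div_of_nonneg_right this h2v.le
  calc ENNReal.ofReal ((2*l) * ((Real.sqrt (2*π*v))⁻¹ * Real.exp (-(|d|+l)^2/(2*v))))
      = ENNReal.ofReal ((Real.sqrt (2*π*v))⁻¹ * Real.exp (-(|d|+l)^2/(2*v))) * volume (Set.Icc (d-l) (d+l)) := by
        rw [Real.volume_Icc]
        have h2l : d + l - (d - l) = 2*l := by ring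
        rw [h2l, ← ENNReal.ofReal_mul (by positivity), mul_comm]
    _ = ∫⁻ _ in Set.Icc (d-l) (d+l), ENNReal.ofReal ((Real.sqrt (2*π*v))⁻¹ * Real.exp (-(|d|+l)^2/(2*v))) := by
        rw [setLIntegral_const]
    _ ≤ ∫⁻ y in Set.Icc (d-l) (d+l), gaussianPDF 0 v y :=
        setLIntegral_mono (measurable_gaussianPDF 0 v) hle

end BMSupport

namespace BMSupport
open Real
open scoped NNReal ENNReal

lemma gauss_Iic (v : ℝ≥0) : 1/2 ≤ gaussianReal 0 v (Set.Iic 0) := by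
  by_cases hv : v = 0
  · subst hv
    rw [gaussianReal_zero_var, Measure.dirac_apply' _ measurableSet_Iic]
    simp [Set.indicator_of_mem (Set.self_mem_Iic (a := (0:ℝ)))]
  · have hmap := gaussianReal_map_const_mul (μ := 0) (v := v) (-1)
    have hv2 : (.mk ((-1:ℝ)^2) (sq_nonneg _) : ℝ≥0) = 1 := by ext; norm_num
    rw [hv2, one_mul, mul_zero] at hmap
    have hm : Measurable fun x : ℝ => -1 * x := by fun_prop
    have hsym : gaussianReal 0 v (Set.Ici 0) = gaussianReal 0 v (Set.Iic 0) := by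
      conv_rhs => rw [← hmap]
      rw [Measure.map_apply hm measurableSet_Iic]
      congr 1
      ext y
      simp only [Set.mem_preimage, Set.mem_Ici, Set.mem_Iic]
      constructor <;> intro h <;> nlinarith
    rw [← hsym]
    exact gauss_Ici v

variable {Ω : Type*} [MeasurableSpace Ω] {P : Measure Ω} {B : ℝ → Ω → ℝ}

lemma sum_ite_inc (c h : ℝ) (ω : Ω) (m : ℕ) :
    ∀ N : ℕ, m ≤ N → ∑ j ∈ Finset.range N,
        (if m ≤ j then B (grid c h (j+1)) ω - B (grid c h j) ω else 0)
      = B (grid c h N) ω - B (grid c h m) ω := by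
  intro N
  induction N with
  | zero => intro hm; interval_cases m; simp
  | succ N ih =>
    intro hm
    rcases Nat.lt_or_ge m (N+1) with hlt | hge
    · have hmN : m ≤ N := by omega
      rw [Finset.sum_range_succ, ih hmN, if_pos hmN]
      ring
    · have hmeq : m = N + 1 := by omega
      subst hmeq
      rw [Finset.sum_range_succ, if_neg (by omega)]
      have : ∀ j ∈ Finset.range N, (if N+1 ≤ j then B (grid c h (j+1)) ω - B (grid c h j) ω else 0) = 0 := by
        intro j hj
        rw [if_neg (by simp at hj; omega)]
      rw [Finset.sum_congr rfl this]
      simp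

end BMSupport

namespace BMSupport
open Real
open scoped NNReal ENNReal

variable {Ω : Type*} [MeasurableSpace Ω] {P : Measure Ω} {B : ℝ → Ω → ℝ}

/-- Lévy-type maximal inequality for Brownian motion on an interval. -/
lemma levy (hB : IsBrownianMotion P B) (s h x : ℝ) (hs : 0 ≤ s) (hh : 0 < h) (hx : 0 < x) :
    P {ω | ∃ u ∈ Set.Icc s (s + h), x < |B u ω - B s ω|}
      ≤ 2 * gaussianReal 0 h.toNNReal {y | x ≤ |y|} := by
  classical
  have hprob := hB.isProbability
  have hSmeas : MeasurableSet {y : ℝ | x ≤ |y|} :=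
    measurableSet_le measurable_const measurable_abs
  -- the discrete-level events
  set E : ℕ → Set Ω := fun K =>
    ⋃ k ∈ Finset.range (2 ^ K + 1), {ω | x < |B (s + (k:ℝ) * (h / 2 ^ K)) ω - B s ω|} with hE
  -- Step 1: discrete Lévy inequality at each level
  have key : ∀ K : ℕ, P (E K) ≤ 2 * gaussianReal 0 h.toNNReal {y | x ≤ |y|} := by
    intro K
    set N : ℕ := 2 ^ K with hN
    set h' : ℝ := h / 2 ^ K with hh'
    have hh'pos : 0 < h' := by rw [hh']; positivity
    have hNpos : 0 < N := by rw [hN]; positivity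
    set Sk : ℕ → Ω → ℝ := fun k ω => B (s + (k:ℝ) * h') ω - B s ω with hSk
    have hSkmeas : ∀ k, Measurable (Sk k) := fun k => meas_inc hB _ _
    set A : ℕ → Set Ω := fun k => {ω | x < |Sk k ω| ∧ ∀ j, j < k → |Sk j ω| ≤ x} with hA
    have hAmeas : ∀ k, MeasurableSet (A k) := by
      intro k
      have : A k = {ω | x < |Sk k ω|} ∩ ⋂ j : ℕ, ⋂ (_ : j < k), {ω | |Sk j ω| ≤ x} := by
        ext ω; simp [hA, Set.mem_iInter]
      rw [this]
      exact ((measurableSet_lt measurable_const (hSkmeas k).abs).inter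
        (MeasurableSet.iInter fun j => MeasurableSet.iInter fun _ =>
          measurableSet_le (hSkmeas j).abs measurable_const))
    have hAdis0 : ∀ a b : ℕ, a < b → Disjoint (A a) (A b) := by
      intro a b hab
      apply Set.disjoint_left.mpr
      rintro ω ⟨ha1, -⟩ ⟨-, hb2⟩
      exact absurd (hb2 a hab) (not_le.mpr ha1)
    have hAdis : (↑(Finset.range (N+1)) : Set ℕ).PairwiseDisjoint A := by
      intro a _ b _ hab
      rcases Nat.lt_or_ge a b with hlt | hge
      · exact hAdis0 a b hlt
      · exact (hAdis0 b a (by omega)).symm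
    have hcover : E K = ⋃ k ∈ Finset.range (N+1), A k := by
      apply Set.eq_of_subset_of_subset
      · intro ω hω
        simp only [hE, Set.mem_iUnion, Finset.mem_range, exists_prop] at hω
        obtain ⟨k, hk, hxk⟩ := hω
        have hexists : ∃ j, x < |Sk j ω| := ⟨k, hxk⟩
        have hk0le : Nat.find hexists ≤ k := Nat.find_min' hexists hxk
        have hk0mem : Nat.find hexists ∈ Finset.range (N+1) := Finset.mem_range.mpr (by omega)
        refine Set.mem_biUnion hk0mem ?_
        exact ⟨Nat.find_spec hexists, fun j hj => not_lt.mp (Nat.find_min hexists hj)⟩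
      · intro ω hω
        rw [Set.mem_iUnion₂] at hω
        obtain ⟨k, hk, hAk⟩ := hω
        exact Set.mem_biUnion hk hAk.1
    -- the per-index inequality
    have hkey2 : ∀ k, k ≤ N → P (A k) ≤ 2 * P (A k ∩ {ω | x ≤ |Sk N ω|}) := by
      intro k hkN
      rcases eq_or_lt_of_le hkN with heq | hlt
      · have hsub : A k ⊆ {ω | x ≤ |Sk N ω|} := by
          intro ω hω
          have h1 := hω.1
          rw [heq] at h1
          exact le_of_lt h1
        have hinter : A k ∩ {ω | x ≤ |Sk N ω|} = A k := Set.inter_eq_self_of_subset_left hsub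
        rw [hinter]
        calc P (A k) = 1 * P (A k) := (one_mul _).symm
          _ ≤ 2 * P (A k) := mul_le_mul_left (by norm_num) _
      · -- k < N
        set Aplus := A k ∩ {ω | x < Sk k ω} with hAp
        set Amin := A k ∩ {ω | Sk k ω < -x} with hAm
        have hsplit : A k = Aplus ∪ Amin := by
          ext ω
          simp only [hAp, hAm, Set.mem_union, Set.mem_inter_iff, Set.mem_setOf_eq]
          constructor
          · intro hω
            rcases lt_abs.mp hω.1 with h1 | h1
            · exact Or.inl ⟨hω, h1⟩
            · exact Or.inr ⟨hω, by linarith⟩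
          · rintro (⟨hω, -⟩ | ⟨hω, -⟩) <;> exact hω
        set Z : Ω → ℝ := fun ω => B (s + (N:ℝ) * h') ω - B (s + (k:ℝ) * h') ω with hZ
        have hZSk : ∀ ω, Sk N ω = Sk k ω + Z ω := by intro ω; simp only [hSk, hZ]; ring
        set Gp := {ω | 0 ≤ Z ω} with hGp
        set Gm := {ω | Z ω ≤ 0} with hGm
        have hskt : s + (k:ℝ) * h' ≤ s + (N:ℝ) * h' := by
          have : (k:ℝ) ≤ N := Nat.cast_le.mpr hkN
          nlinarith
        have hsk0 : 0 ≤ s + (k:ℝ) * h' := by positivity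
        have hPGp : 1/2 ≤ P Gp := by
          have := prob_inc_mem hB hsk0 hskt (measurableSet_Ici (a := (0:ℝ)))
          have hset : {ω | B (s + (N:ℝ)*h') ω - B (s + (k:ℝ)*h') ω ∈ Set.Ici 0} = Gp := rfl
          rw [hset] at this
          rw [this]
          exact gauss_Ici _
        have hPGm : 1/2 ≤ P Gm := by
          have := prob_inc_mem hB hsk0 hskt (measurableSet_Iic (a := (0:ℝ)))
          have hset : {ω | B (s + (N:ℝ)*h') ω - B (s + (k:ℝ)*h') ω ∈ Set.Iic 0} = Gm := rfl
          rw [hset] at this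
          rw [this]
          exact gauss_Iic _
        -- independence setup
        set X : Fin N → Ω → ℝ :=
          fun l ω => B (grid s h' ((l : ℕ) + 1)) ω - B (grid s h' (l : ℕ)) ω with hX
        have hXm : ∀ l, Measurable (X l) := fun l => meas_inc hB _ _
        set Sa : Finset (Fin N) := Finset.univ.filter (fun l => (l:ℕ) < k) with hSa
        set Tb : Finset (Fin N) := Finset.univ.filter (fun l => k ≤ (l:ℕ)) with hTb
        have hdisjST : Disjoint Sa Tb := by
          rw [Finset.disjoint_left]
          intro l hl hl'
          simp [hSa, hTb] at hl hl'
          omega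
        have hIF : IndepFun (fun ω (l : ↥Sa) => X l ω) (fun ω (l : ↥Tb) => X l ω) P :=
          (incs_indep hB s h' hs hh'pos.le N).indepFun_finset Sa Tb hdisjST hXm
        -- partial sums from the left block
        set tW : (↥Sa → ℝ) → ℕ → ℝ := fun g j => ∑ l ∈ Finset.range j,
          (if hl : l < N ∧ l < k then g ⟨⟨l, hl.1⟩, by simp [hSa, hl.2]⟩ else 0) with htW
        have htWmeas : ∀ j, Measurable (fun g => tW g j) := by
          intro j
          apply Finset.measurable_sum
          intro l _
          by_cases hl : l < N ∧ l < k
          · simp only [dif_pos hl]; exact measurable_pi_apply _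
          · simp only [dif_neg hl]; exact measurable_const
        have htWeq : ∀ (ω : Ω) (j : ℕ), j ≤ k → tW (fun l : ↥Sa => X l ω) j = Sk j ω := by
          intro ω j hj
          have hterm : ∀ l ∈ Finset.range j,
              (if hl : l < N ∧ l < k then X ⟨l, hl.1⟩ ω else 0)
                = B (grid s h' (0 + l + 1)) ω - B (grid s h' (0 + l)) ω := by
            intro l hl
            have hlj : l < j := Finset.mem_range.mp hl
            have hcond : l < N ∧ l < k := ⟨by omega, by omega⟩
            rw [dif_pos hcond]
            simp only [hX, Nat.zero_add]
          rw [htW]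
          simp only
          rw [Finset.sum_congr rfl hterm, sum_inc]
          simp only [Nat.zero_add]
          have h0 : grid s h' 0 = s := by simp [grid]
          have hj' : grid s h' j = s + (j:ℝ) * h' := rfl
          rw [h0, hj']
        -- sum of the right block
        set q : (↥Tb → ℝ) → ℝ := fun g => ∑ l : ↥Tb, g l with hq
        have hqmeas : Measurable q := by
          apply Finset.measurable_sum
          intro l _
          exact measurable_pi_apply _
        have hqeq : ∀ ω : Ω, q (fun l : ↥Tb => X l ω) = Z ω := by
          intro ω
          rw [hq]
          simp only
          rw [Finset.sum_coe_sort Tb (fun l => X l ω), hTb, Finset.sum_filter]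
          have : ∀ l : Fin N, (if k ≤ (l:ℕ) then X l ω else 0)
              = (fun j : ℕ => if k ≤ j then B (grid s h' (j+1)) ω - B (grid s h' j) ω else 0) (l : ℕ) := by
            intro l; rfl
          rw [Finset.sum_congr rfl (fun l _ => this l),
            Fin.sum_univ_eq_sum_range (fun j : ℕ => if k ≤ j then B (grid s h' (j+1)) ω - B (grid s h' j) ω else 0) N,
            sum_ite_inc (B := B) s h' ω k N hkN]
          rfl
        -- events as preimages
        set UAp : Set (↥Sa → ℝ) := {g | (x < |tW g k| ∧ ∀ j, j < k → |tW g j| ≤ x) ∧ x < tW g k} with hUAp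
        set UAm : Set (↥Sa → ℝ) := {g | (x < |tW g k| ∧ ∀ j, j < k → |tW g j| ≤ x) ∧ tW g k < -x} with hUAm
        have hUApmeas : MeasurableSet UAp := by
          have : UAp = (({g | x < |tW g k|} ∩ ⋂ j : ℕ, ⋂ (_ : j < k), {g | |tW g j| ≤ x})
              ∩ {g | x < tW g k}) := by
            ext g; simp [hUAp, Set.mem_iInter]
          rw [this]
          exact (((measurableSet_lt measurable_const (htWmeas k).abs).inter
            (MeasurableSet.iInter fun j => MeasurableSet.iInter fun _ =>
              measurableSet_le (htWmeas j).abs measurable_const)).inter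
            (measurableSet_lt measurable_const (htWmeas k)))
        have hUAmmeas : MeasurableSet UAm := by
          have : UAm = (({g | x < |tW g k|} ∩ ⋂ j : ℕ, ⋂ (_ : j < k), {g | |tW g j| ≤ x})
              ∩ {g | tW g k < -x}) := by
            ext g; simp [hUAm, Set.mem_iInter]
          rw [this]
          exact (((measurableSet_lt measurable_const (htWmeas k).abs).inter
            (MeasurableSet.iInter fun j => MeasurableSet.iInter fun _ =>
              measurableSet_le (htWmeas j).abs measurable_const)).inter
            (measurableSet_lt (htWmeas k) measurable_const))
        have hApPre : Aplus = (fun ω (l : ↥Sa) => X l ω) ⁻¹' UAp := by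
          ext ω
          simp only [hAp, hA, hUAp, Set.mem_inter_iff, Set.mem_setOf_eq, Set.mem_preimage]
          rw [htWeq ω k le_rfl]
          constructor
          · rintro ⟨⟨h1, h2⟩, h3⟩
            exact ⟨⟨h1, fun j hj => by rw [htWeq ω j (le_of_lt hj)]; exact h2 j hj⟩, h3⟩
          · rintro ⟨⟨h1, h2⟩, h3⟩
            exact ⟨⟨h1, fun j hj => by have := h2 j hj; rwa [htWeq ω j (le_of_lt hj)] at this⟩, h3⟩
        have hAmPre : Amin = (fun ω (l : ↥Sa) => X l ω) ⁻¹' UAm := by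
          ext ω
          simp only [hAm, hA, hUAm, Set.mem_inter_iff, Set.mem_setOf_eq, Set.mem_preimage]
          rw [htWeq ω k le_rfl]
          constructor
          · rintro ⟨⟨h1, h2⟩, h3⟩
            exact ⟨⟨h1, fun j hj => by rw [htWeq ω j (le_of_lt hj)]; exact h2 j hj⟩, h3⟩
          · rintro ⟨⟨h1, h2⟩, h3⟩
            exact ⟨⟨h1, fun j hj => by have := h2 j hj; rwa [htWeq ω j (le_of_lt hj)] at this⟩, h3⟩
        have hGpPre : Gp = (fun ω (l : ↥Tb) => X l ω) ⁻¹' (q ⁻¹' (Set.Ici 0)) := by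
          ext ω
          simp only [hGp, Set.mem_setOf_eq, Set.mem_preimage, Set.mem_Ici]
          rw [hqeq ω]
        have hGmPre : Gm = (fun ω (l : ↥Tb) => X l ω) ⁻¹' (q ⁻¹' (Set.Iic 0)) := by
          ext ω
          simp only [hGm, Set.mem_setOf_eq, Set.mem_preimage, Set.mem_Iic]
          rw [hqeq ω]
        have hmeasTuplSa : Measurable (fun ω (l : ↥Sa) => X l ω) :=
          measurable_pi_lambda _ (fun l => hXm l)
        have hmeasTuplTb : Measurable (fun ω (l : ↥Tb) => X l ω) :=
          measurable_pi_lambda _ (fun l => hXm l)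
        have hprodp : P (Aplus ∩ Gp) = P Aplus * P Gp := by
          rw [hApPre, hGpPre]
          exact hIF.measure_inter_preimage_eq_mul UAp (q ⁻¹' Set.Ici 0) hUApmeas
            (hqmeas measurableSet_Ici)
        have hprodm : P (Amin ∩ Gm) = P Amin * P Gm := by
          rw [hAmPre, hGmPre]
          exact hIF.measure_inter_preimage_eq_mul UAm (q ⁻¹' Set.Iic 0) hUAmmeas
            (hqmeas measurableSet_Iic)
        have hhalfp : P Aplus ≤ 2 * P (Aplus ∩ Gp) := by
          rw [hprodp]
          have h21 : (2:ℝ≥0∞) * 2⁻¹ = 1 := ENNReal.mul_inv_cancel (by norm_num) (by norm_num)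
          calc P Aplus = 2 * (P Aplus * (1/2)) := by
                rw [mul_comm (P Aplus), ← mul_assoc, one_div, h21, one_mul]
            _ ≤ 2 * (P Aplus * P Gp) := by
                exact mul_le_mul_right (mul_le_mul_right hPGp _) 2
        have hhalfm : P Amin ≤ 2 * P (Amin ∩ Gm) := by
          rw [hprodm]
          have h21 : (2:ℝ≥0∞) * 2⁻¹ = 1 := ENNReal.mul_inv_cancel (by norm_num) (by norm_num)
          calc P Amin = 2 * (P Amin * (1/2)) := by
                rw [mul_comm (P Amin), ← mul_assoc, one_div, h21, one_mul]
            _ ≤ 2 * (P Amin * P Gm) := by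
                exact mul_le_mul_right (mul_le_mul_right hPGm _) 2
        have hsubp : Aplus ∩ Gp ⊆ A k ∩ {ω | x ≤ |Sk N ω|} := by
          rintro ω ⟨⟨hak, hx1⟩, hz⟩
          refine ⟨hak, ?_⟩
          simp only [Set.mem_setOf_eq] at hx1
          have : x ≤ Sk N ω := by
            rw [hZSk ω]; simp only [hGp, Set.mem_setOf_eq] at hz; linarith
          exact le_trans this (le_abs_self _)
        have hsubm : Amin ∩ Gm ⊆ A k ∩ {ω | x ≤ |Sk N ω|} := by
          rintro ω ⟨⟨hak, hx1⟩, hz⟩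
          refine ⟨hak, ?_⟩
          have h1 : Sk N ω ≤ -x := by
            rw [hZSk ω]; simp only [hGm, Set.mem_setOf_eq] at hz
            simp only [Set.mem_setOf_eq] at hx1; linarith
          calc x = -(-x) := by ring
            _ ≤ -(Sk N ω) := by linarith
            _ ≤ |Sk N ω| := neg_le_abs _
        have hdisjpm : Disjoint (Aplus ∩ Gp) (Amin ∩ Gm) := by
          apply Set.disjoint_left.mpr
          rintro ω ⟨⟨-, h1⟩, -⟩ ⟨⟨-, h2⟩, -⟩
          simp only [Set.mem_setOf_eq] at h1 h2
          linarith
        have hmeasApGp : MeasurableSet (Aplus ∩ Gp) := by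
          rw [hApPre, hGpPre]
          exact (hmeasTuplSa hUApmeas).inter (hmeasTuplTb (hqmeas measurableSet_Ici))
        calc P (A k) ≤ P Aplus + P Amin := by
              rw [hsplit]; exact measure_union_le _ _
          _ ≤ 2 * P (Aplus ∩ Gp) + 2 * P (Amin ∩ Gm) := add_le_add hhalfp hhalfm
          _ = 2 * (P (Aplus ∩ Gp) + P (Amin ∩ Gm)) := by ring
          _ = 2 * P ((Aplus ∩ Gp) ∪ (Amin ∩ Gm)) := by
              rw [measure_union hdisjpm]
              rw [hAmPre, hGmPre]
              exact (hmeasTuplSa hUAmmeas).inter (hmeasTuplTb (hqmeas measurableSet_Iic))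
          _ ≤ 2 * P (A k ∩ {ω | x ≤ |Sk N ω|}) := by
              apply mul_le_mul_right
              apply measure_mono
              exact Set.union_subset hsubp hsubm
    -- summation
    have hlast : P {ω | x ≤ |Sk N ω|} = gaussianReal 0 h.toNNReal {y | x ≤ |y|} := by
      have harith : s + ((N:ℕ):ℝ) * h' = s + h := by
        rw [hN, hh']; push_cast; field_simp
      have hmem : {ω | x ≤ |Sk N ω|} = {ω | B (s+h) ω - B s ω ∈ {y | x ≤ |y|}} := by
        rw [hSk]; simp only; rw [harith]; rfl
      rw [hmem, prob_inc_mem hB hs (by linarith) hSmeas]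
      have harith2 : s + h - s = h := by ring
      rw [harith2]
    calc P (E K) = P (⋃ k ∈ Finset.range (N+1), A k) := by rw [hcover]
      _ = ∑ k ∈ Finset.range (N+1), P (A k) :=
          measure_biUnion_finset hAdis (fun k _ => hAmeas k)
      _ ≤ ∑ k ∈ Finset.range (N+1), 2 * P (A k ∩ {ω | x ≤ |Sk N ω|}) := by
          apply Finset.sum_le_sum
          intro k hk
          exact hkey2 k (by simp at hk; omega)
      _ = 2 * ∑ k ∈ Finset.range (N+1), P (A k ∩ {ω | x ≤ |Sk N ω|}) := by
          rw [Finset.mul_sum]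
      _ = 2 * P (⋃ k ∈ Finset.range (N+1), (A k ∩ {ω | x ≤ |Sk N ω|})) := by
          congr 1
          refine (measure_biUnion_finset ?_ (fun k _ => (hAmeas k).inter
            (measurableSet_le measurable_const (hSkmeas N).abs))).symm
          intro a ha b hb hab
          exact Set.disjoint_of_subset Set.inter_subset_left Set.inter_subset_left
            (hAdis ha hb hab)
      _ ≤ 2 * P {ω | x ≤ |Sk N ω|} := by
          apply mul_le_mul_right
          apply measure_mono
          exact Set.iUnion₂_subset fun k _ => Set.inter_subset_right
      _ = 2 * gaussianReal 0 h.toNNReal {y | x ≤ |y|} := by rw [hlast]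
  -- Step 2: pass to the limit
  have hmonoE : Monotone E := by
    apply monotone_nat_of_le_succ
    intro K ω hω
    simp only [hE, Set.mem_iUnion, Finset.mem_range] at hω ⊢
    obtain ⟨k, hk, hxk⟩ := hω
    refine ⟨2*k, by omega, ?_⟩
    have : (↑(2*k) : ℝ) * (h / 2 ^ (K+1)) = (k:ℝ) * (h / 2 ^ K) := by
      push_cast; field_simp; ring
    rw [this]
    exact hxk
  have hunion : {ω | ∃ u ∈ Set.Icc s (s + h), x < |B u ω - B s ω|} = ⋃ K, E K := by
    apply Set.eq_of_subset_of_subset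
    · rintro ω ⟨u, hu, hxu⟩
      obtain ⟨K, k, hk, hgt⟩ := approx hB ω hh hu hxu
      simp only [Set.mem_iUnion, hE, Finset.mem_range]
      exact ⟨K, k, by omega, hgt⟩
    · intro ω hω
      simp only [Set.mem_iUnion, hE, Finset.mem_range] at hω
      obtain ⟨K, k, hk, hxk⟩ := hω
      have h2K : (0:ℝ) < 2 ^ K := by positivity
      have hk2K : (k:ℝ) ≤ 2 ^ K := by
        calc (k:ℝ) ≤ ((2^K : ℕ) : ℝ) := Nat.cast_le.mpr (by omega)
          _ = 2 ^ K := by push_cast; ring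
      refine ⟨s + (k:ℝ) * (h / 2 ^ K), ⟨?_, ?_⟩, hxk⟩
      · have : 0 ≤ (k:ℝ) * (h / 2 ^ K) := by positivity
        linarith
      · have h1 : (k:ℝ) * (h / 2 ^ K) ≤ 2 ^ K * (h / 2 ^ K) :=
          mul_le_mul_of_nonneg_right hk2K (by positivity)
        have h2 : (2:ℝ) ^ K * (h / 2 ^ K) = h := by field_simp
        nlinarith
  rw [hunion]
  calc P (⋃ K, E K) = ⨆ K, P (E K) :=
        Directed.measure_iUnion (Monotone.directed_le hmonoE)
    _ ≤ 2 * gaussianReal 0 h.toNNReal {y | x ≤ |y|} := iSup_le key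

end BMSupport

namespace BMSupport
open Real Filter
open scoped NNReal ENNReal Topology

variable {Ω : Type*} [MeasurableSpace Ω] {P : Measure Ω} {B : ℝ → Ω → ℝ}

lemma mem_subblock {s δ : ℝ} (hδ : 0 < δ) {m : ℕ} (hm : 0 < m) {u : ℝ}
    (hu : u ∈ Set.Icc s (s + δ)) :
    ∃ j : ℕ, j < m ∧ u ∈ Set.Icc (s + (j:ℝ) * (δ/m)) (s + (j:ℝ) * (δ/m) + δ/m) := by
  have hmR : (0:ℝ) < m := by positivity
  have hh' : (0:ℝ) < δ/m := by positivity
  obtain ⟨hua, hub⟩ := hu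
  have hmh : (m:ℝ) * (δ/m) = δ := by field_simp
  rcases Nat.lt_or_ge (⌊(u - s)/(δ/m)⌋₊) m with hlt | hge
  · refine ⟨⌊(u - s)/(δ/m)⌋₊, hlt, ?_, ?_⟩
    · have := Nat.floor_le (div_nonneg (by linarith : (0:ℝ) ≤ u - s) hh'.le)
      rw [le_div_iff₀ hh'] at this
      linarith
    · have := Nat.lt_floor_add_one ((u - s)/(δ/m))
      rw [div_lt_iff₀ hh'] at this
      nlinarith
  · have hm1 : ((m - 1 : ℕ) : ℝ) = (m:ℝ) - 1 := by
      have h1 : (1:ℕ) ≤ m := hm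
      push_cast [h1]
      ring
    have h1 : (m:ℝ) ≤ (u - s)/(δ/m) := by
      calc (m:ℝ) ≤ (⌊(u - s)/(δ/m)⌋₊ : ℝ) := Nat.cast_le.mpr hge
        _ ≤ (u - s)/(δ/m) := Nat.floor_le (div_nonneg (by linarith) hh'.le)
    rw [le_div_iff₀ hh'] at h1
    refine ⟨m - 1, by omega, ?_, ?_⟩
    · rw [hm1]; nlinarith
    · rw [hm1]; nlinarith

lemma blockF_pos (hB : IsBrownianMotion P B) {s δ r d η : ℝ} (hs : 0 ≤ s) (hδ : 0 < δ)
    (hr : 0 < r) (hd : |d| ≤ r/4) (hη : 0 < η) :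
    0 < P (blockF B s δ r d η) := by
  classical
  have hprob := hB.isProbability
  set c₀ : ℝ := min r η with hc₀def
  have hc₀ : 0 < c₀ := lt_min hr hη
  have hc₀r : c₀ ≤ r := min_le_left _ _
  have hc₀η : c₀ ≤ η := min_le_right _ _
  set A : ℝ := (|d| + c₀/2)^2/(2*δ) with hAdef
  set κ : ℝ := c₀ * ((Real.sqrt (2*π*δ))⁻¹ * Real.exp (-A)) with hκdef
  have hsq2πδ : (0:ℝ) < Real.sqrt (2*π*δ) := Real.sqrt_pos.mpr (by positivity)
  have hκ : 0 < κ := by rw [hκdef]; positivity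
  set β : ℝ := r^2/(256*δ) with hβdef
  have hβ : 0 < β := by rw [hβdef]; positivity
  -- choose the number of subblocks
  have htend : Tendsto (fun t : ℝ => t * Real.exp (-β * t)) atTop (𝓝 0) := by
    have h1 := Real.tendsto_pow_mul_exp_neg_atTop_nhds_zero 1
    have h2 : Tendsto (fun t : ℝ => β * t) atTop atTop :=
      Tendsto.const_mul_atTop hβ tendsto_id
    have h3 := h1.comp h2
    have h4 : Tendsto (fun t : ℝ => β⁻¹ * ((β * t)^1 * Real.exp (-(β * t)))) atTop (𝓝 (β⁻¹ * 0)) :=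
      h3.const_mul _
    rw [mul_zero] at h4
    convert h4 using 2 with t
    field_simp
  have htendN : Tendsto (fun m : ℕ => (m:ℝ) * Real.exp (-β * m)) atTop (𝓝 0) :=
    htend.comp tendsto_natCast_atTop_atTop
  have heps : (0:ℝ) < κ / (2 * Real.sqrt 2) := by positivity
  obtain ⟨m, hsmall, hm1⟩ :=
    ((htendN.eventually_lt_const heps).and (eventually_ge_atTop 1)).exists
  have hmR : (0:ℝ) < m := by exact_mod_cast hm1
  have hmR1 : (1:ℝ) ≤ m := by exact_mod_cast hm1
  have hm : 0 < m := hm1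
  set h' : ℝ := δ/m with hh'def
  have hh' : 0 < h' := by rw [hh'def]; positivity
  have hv : (h').toNNReal ≠ 0 := ne_of_gt (Real.toNNReal_pos.mpr hh')
  have hvc : (((h').toNNReal : ℝ≥0) : ℝ) = h' := Real.coe_toNNReal _ hh'.le
  have hmh : (m:ℝ) * h' = δ := by rw [hh'def]; field_simp
  -- Part C: each subblock event has positive probability
  have hposD : ∀ j : Fin m, 0 < P (blockF B (s + (j:ℕ) * h') h' (r/8) (d/m) (c₀/(2*m))) := by
    intro j
    set a : ℝ := s + (j:ℕ) * h' with hadef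
    have ha : 0 ≤ a := by rw [hadef]; positivity
    set G : Set Ω := {ω | ∀ u ∈ Set.Icc a (a + h'), |B u ω - B a ω| ≤ r/8} with hGdef
    set F : Set Ω := {ω | |B (a + h') ω - B a ω - d/m| ≤ c₀/(2*m)} with hFdef
    have hGF : blockF B a h' (r/8) (d/m) (c₀/(2*m)) = G ∩ F := by
      ext ω; simp only [blockF, hGdef, hFdef, Set.mem_setOf_eq, Set.mem_inter_iff]
    set Gc : Set Ω := {ω | ∃ u ∈ Set.Icc a (a + h'), r/8 < |B u ω - B a ω|} with hGcdef
    -- lower bound for P F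
    have hPF : ENNReal.ofReal (κ/m) ≤ P F := by
      have hFeq : F = {ω | B (a + h') ω - B a ω ∈ {y | |y - d/m| ≤ c₀/(2*m)}} := rfl
      have hSm : MeasurableSet {y : ℝ | |y - d/m| ≤ c₀/(2*m)} :=
        measurableSet_le (measurable_id.sub_const _).abs measurable_const
      have hmap := prob_inc_mem hB ha (by linarith : a ≤ a + h') hSm
      have harith : a + h' - a = h' := by ring
      rw [harith] at hmap
      rw [hFeq, hmap]
      refine le_trans ?_ (gauss_interval (h').toNNReal hv (d/m) (c₀/(2*m)) (by positivity))
      apply ENNReal.ofReal_le_ofReal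
      rw [hvc]
      have e1 : 2*(c₀/(2*(m:ℝ))) = c₀/m := by field_simp
      have e2 : (Real.sqrt (2*π*δ))⁻¹ ≤ (Real.sqrt (2*π*h'))⁻¹ := by
        apply inv_anti₀ (Real.sqrt_pos.mpr (by positivity))
        apply Real.sqrt_le_sqrt
        rw [hh'def]
        have : δ/(m:ℝ) ≤ δ := by
          rw [div_le_iff₀ hmR]; nlinarith
        nlinarith [pi_pos]
      have e3 : Real.exp (-A) ≤ Real.exp (-(|d/(m:ℝ)| + c₀/(2*m))^2/(2*h')) := by
        apply Real.exp_le_exp.mpr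
        rw [hAdef, hh'def, abs_div, abs_of_pos hmR]
        have harg : (|d|/(m:ℝ) + c₀/(2*m))^2 / (2*(δ/m)) = (|d| + c₀/2)^2/(2*δ*m) := by
          field_simp
        rw [neg_div]
        apply neg_le_neg
        rw [harg]
        have h2δ : (0:ℝ) < 2*δ := by positivity
        apply div_le_div_of_nonneg_left (sq_nonneg _) h2δ
        nlinarith
      calc κ/(m:ℝ) = (c₀/m) * ((Real.sqrt (2*π*δ))⁻¹ * Real.exp (-A)) := by
            rw [hκdef]; ring
        _ ≤ (c₀/m) * ((Real.sqrt (2*π*h'))⁻¹ * Real.exp (-(|d/(m:ℝ)| + c₀/(2*m))^2/(2*h'))) := by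
            apply mul_le_mul_of_nonneg_left _ (by positivity)
            exact mul_le_mul e2 e3 (by positivity) (by positivity)
        _ = 2*(c₀/(2*(m:ℝ))) * ((Real.sqrt (2*π*h'))⁻¹ * Real.exp (-(|d/(m:ℝ)| + c₀/(2*m))^2/(2*h'))) := by
            rw [e1]
    -- upper bound for the oscillation event
    have hPGc : P Gc ≤ ENNReal.ofReal (2*Real.sqrt 2 * Real.exp (-β * m)) := by
      have hlev := levy hB a h' (r/8) ha hh' (by positivity)
      refine le_trans hlev ?_
      have htail := gauss_tail (h').toNNReal hv (r/8) (by positivity)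
      rw [hvc] at htail
      have harg : -(r/8)^2/(4*h') = -β*m := by
        rw [hβdef, hh'def]
        field_simp
        ring
      rw [harg] at htail
      calc 2 * gaussianReal 0 (h').toNNReal {y | r/8 ≤ |y|}
          ≤ 2 * ENNReal.ofReal (Real.sqrt 2 * Real.exp (-β*m)) := mul_le_mul_right htail 2
        _ = ENNReal.ofReal (2*Real.sqrt 2 * Real.exp (-β*m)) := by
            rw [mul_assoc, ENNReal.ofReal_mul (by norm_num : (0:ℝ) ≤ 2), ENNReal.ofReal_ofNat]
    have hlt2 : ENNReal.ofReal (2*Real.sqrt 2 * Real.exp (-β*m)) < ENNReal.ofReal (κ/m) := by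
      rw [ENNReal.ofReal_lt_ofReal_iff (by positivity)]
      have h2s : (0:ℝ) < 2*Real.sqrt 2 := by positivity
      rw [lt_div_iff₀ hmR]
      calc 2*Real.sqrt 2 * Real.exp (-β*m) * m = 2*Real.sqrt 2 * ((m:ℝ) * Real.exp (-β*m)) := by
            ring
        _ < 2*Real.sqrt 2 * (κ/(2*Real.sqrt 2)) := mul_lt_mul_of_pos_left hsmall h2s
        _ = κ := by field_simp
    have hFsub : F ⊆ (G ∩ F) ∪ Gc := by
      intro ω hω
      by_cases hg : ω ∈ G
      · exact Or.inl ⟨hg, hω⟩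
      · right
        rw [hGdef] at hg
        simp only [Set.mem_setOf_eq] at hg
        push_neg at hg
        obtain ⟨u, hu, hgt⟩ := hg
        exact ⟨u, hu, hgt⟩
    rw [hGF]
    by_contra h0
    rw [not_lt, le_zero_iff] at h0
    have hchain : ENNReal.ofReal (κ/m) ≤ ENNReal.ofReal (2*Real.sqrt 2 * Real.exp (-β*m)) :=
      calc ENNReal.ofReal (κ/m) ≤ P F := hPF
        _ ≤ P ((G ∩ F) ∪ Gc) := measure_mono hFsub
        _ ≤ P (G ∩ F) + P Gc := measure_union_le _ _
        _ = P Gc := by rw [h0, zero_add]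
        _ ≤ _ := hPGc
    exact absurd (lt_of_le_of_lt hchain hlt2) (lt_irrefl _)
  -- Part B: product bound
  have hprod : ∏ j : Fin m, P (blockF B (s + (j:ℕ) * h') h' (r/8) (d/m) (c₀/(2*m)))
      ≤ P (⋂ j : Fin m, blockF B (s + (j:ℕ) * h') h' (r/8) (d/m) (c₀/(2*m))) :=
    blocks_prod hB s h' hs hh' m (fun _ => r/8) (fun _ => d/m) (fun _ => c₀/(2*m))
  -- Part A: pathwise inclusion
  have hincl : (⋂ j : Fin m, blockF B (s + (j:ℕ) * h') h' (r/8) (d/m) (c₀/(2*m)))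
      ⊆ blockF B s δ r d η := by
    intro ω hω
    simp only [Set.mem_iInter] at hω
    have hend : ∀ j : Fin m,
        |B (s + ((j:ℕ):ℝ)*h' + h') ω - B (s + ((j:ℕ):ℝ)*h') ω - d/m| ≤ c₀/(2*m) :=
      fun j => (hω j).2
    have hsum : ∀ i : ℕ, i ≤ m →
        |B (s + (i:ℝ)*h') ω - B s ω - (i:ℝ)*(d/m)| ≤ (i:ℝ) * (c₀/(2*m)) := by
      intro i
      induction i with
      | zero =>
        intro _
        simp only [Nat.cast_zero, zero_mul, add_zero, sub_zero, sub_self, abs_zero, le_refl]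
      | succ i ih =>
        intro him
        have hi : i < m := by omega
        have h1 := ih (by omega)
        have h2 := hend ⟨i, hi⟩
        have harg : s + ((i+1 : ℕ):ℝ)*h' = s + (i:ℝ)*h' + h' := by push_cast; ring
        have hdecomp : B (s + ((i+1:ℕ):ℝ)*h') ω - B s ω - ((i+1:ℕ):ℝ)*(d/m)
            = (B (s + (i:ℝ)*h') ω - B s ω - (i:ℝ)*(d/m))
              + (B (s + (i:ℝ)*h' + h') ω - B (s + (i:ℝ)*h') ω - d/m) := by
          rw [harg]
          push_cast
          ring
        have hcast : ((i+1:ℕ):ℝ) = (i:ℝ) + 1 := by push_cast; ring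
        calc |B (s + ((i+1:ℕ):ℝ)*h') ω - B s ω - ((i+1:ℕ):ℝ)*(d/m)|
            = |(B (s + (i:ℝ)*h') ω - B s ω - (i:ℝ)*(d/m))
              + (B (s + (i:ℝ)*h' + h') ω - B (s + (i:ℝ)*h') ω - d/m)| := by rw [hdecomp]
          _ ≤ |B (s + (i:ℝ)*h') ω - B s ω - (i:ℝ)*(d/m)|
              + |B (s + (i:ℝ)*h' + h') ω - B (s + (i:ℝ)*h') ω - d/m| := abs_add_le _ _
          _ ≤ (i:ℝ) * (c₀/(2*m)) + c₀/(2*m) := add_le_add h1 h2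
          _ = ((i+1:ℕ):ℝ) * (c₀/(2*m)) := by rw [hcast]; ring
    constructor
    · -- sup part
      intro u hu
      obtain ⟨j, hjm, hu'⟩ := mem_subblock hδ hm hu
      have hblock := (hω ⟨j, hjm⟩).1 u hu'
      have hsumj := hsum j (le_of_lt hjm)
      have hjR : (j:ℝ) ≤ m := by exact_mod_cast le_of_lt hjm
      have hb1 : (j:ℝ) * (c₀/(2*m)) ≤ c₀/2 := by
        have h2 : (m:ℝ) * (c₀/(2*m)) = c₀/2 := by field_simp
        have h3 : (j:ℝ) * (c₀/(2*m)) ≤ (m:ℝ) * (c₀/(2*m)) :=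
          mul_le_mul_of_nonneg_right hjR (by positivity)
        linarith
      have hb2 : |(j:ℝ) * (d/m)| ≤ |d| := by
        rw [abs_mul, Nat.abs_cast, abs_div, abs_of_pos hmR]
        calc (j:ℝ) * (|d|/m) = (j:ℝ)/m * |d| := by ring
          _ ≤ 1 * |d| := by
              apply mul_le_mul_of_nonneg_right _ (abs_nonneg d)
              rw [div_le_one hmR]
              exact hjR
          _ = |d| := one_mul _
      calc |B u ω - B s ω|
          ≤ |B u ω - B (s + (j:ℝ)*h') ω| + |B (s + (j:ℝ)*h') ω - B s ω| := by
            have : B u ω - B s ω = (B u ω - B (s + (j:ℝ)*h') ω) + (B (s + (j:ℝ)*h') ω - B s ω) := by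
              ring
            rw [this]; exact abs_add_le _ _
        _ ≤ r/8 + (|B (s + (j:ℝ)*h') ω - B s ω - (j:ℝ)*(d/m)| + |(j:ℝ)*(d/m)|) := by
            apply add_le_add hblock
            have heq : (B (s + (j:ℝ)*h') ω - B s ω - (j:ℝ)*(d/m)) + (j:ℝ)*(d/m)
                = B (s + (j:ℝ)*h') ω - B s ω := by ring
            calc |B (s + (j:ℝ)*h') ω - B s ω|
                = |(B (s + (j:ℝ)*h') ω - B s ω - (j:ℝ)*(d/m)) + (j:ℝ)*(d/m)| :=
                  (congrArg abs heq).symm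
              _ ≤ _ := abs_add_le _ _
        _ ≤ r/8 + (c₀/2 + |d|) := by
            apply add_le_add_right
            exact add_le_add (le_trans hsumj hb1) hb2
        _ ≤ r := by
            have : c₀/2 ≤ r/2 := by linarith
            linarith
    · -- endpoint part
      have hsm := hsum m le_rfl
      have e1 : (m:ℝ)*(d/m) = d := by field_simp
      have e2 : (m:ℝ)*(c₀/(2*m)) = c₀/2 := by field_simp
      rw [hmh, e1, e2] at hsm
      calc |B (s + δ) ω - B s ω - d| ≤ c₀/2 := hsm
        _ ≤ η := by linarith
  -- conclusion
  calc (0:ℝ≥0∞) < ∏ j : Fin m, P (blockF B (s + (j:ℕ) * h') h' (r/8) (d/m) (c₀/(2*m))) := by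
        rw [CanonicallyOrderedAdd.prod_pos]
        intro j _
        exact hposD j
    _ ≤ P (⋂ j : Fin m, blockF B (s + (j:ℕ) * h') h' (r/8) (d/m) (c₀/(2*m))) := hprod
    _ ≤ P (blockF B s δ r d η) := measure_mono hincl

end BMSupport

open scoped ENNReal in
open BMSupport in
/-- Support theorem for Brownian motion: for any continuous `f : [0,1] → ℝ`
with `f(0) = 0` and any `ε > 0`, with positive probability the Brownian path
stays uniformly `ε`-close to `f` on `[0,1]`. -/
theorem brownian_support_theorem {Ω : Type*} [MeasurableSpace Ω]
    (P : Measure Ω) (B : ℝ → Ω → ℝ) (hB : IsBrownianMotion P B)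
    (f : ℝ → ℝ) (hf : ContinuousOn f (Set.Icc 0 1)) (hf0 : f 0 = 0)
    (ε : ℝ) (hε : 0 < ε) :
    0 < P {ω | ∀ t ∈ Set.Icc (0 : ℝ) 1, |B t ω - f t| < ε} := by
  classical
  have hprob := hB.isProbability
  have hUC : UniformContinuousOn f (Set.Icc 0 1) :=
    (isCompact_Icc).uniformContinuousOn_of_continuous hf
  rw [Metric.uniformContinuousOn_iff] at hUC
  obtain ⟨δ₀, hδ₀, hUCδ⟩ := hUC (ε/8) (by linarith)
  obtain ⟨n₀, hn₀⟩ := exists_nat_one_div_lt hδ₀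
  set n : ℕ := n₀ + 1 with hndef
  have hn : 0 < n := Nat.succ_pos _
  have hnR : (0:ℝ) < n := by positivity
  have hnR1 : (1:ℝ) ≤ n := by exact_mod_cast hn
  have h1n : 1/(n:ℝ) < δ₀ := by
    rw [hndef]; push_cast; exact hn₀
  have hfclose : ∀ u v : ℝ, u ∈ Set.Icc (0:ℝ) 1 → v ∈ Set.Icc (0:ℝ) 1 → |u - v| ≤ 1/(n:ℝ) →
      |f u - f v| ≤ ε/8 := by
    intro u v hu hv huv
    have := hUCδ u hu v hv (by rw [Real.dist_eq]; linarith)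
    rw [Real.dist_eq] at this
    linarith
  have hpt : ∀ i : ℕ, i ≤ n → ((i:ℝ)/n) ∈ Set.Icc (0:ℝ) 1 := by
    intro i hi
    constructor
    · positivity
    · rw [div_le_one hnR]
      exact_mod_cast hi
  set dd : Fin n → ℝ := fun i => f ((((i:ℕ)+1 : ℕ) : ℝ)/n) - f (((i:ℕ) : ℝ)/n) with hdd
  have hddb : ∀ i : Fin n, |dd i| ≤ ε/8 := by
    intro i
    apply hfclose _ _ (hpt _ i.2) (hpt _ (le_of_lt i.2))
    have e1 : (((i:ℕ)+1 : ℕ) : ℝ)/n - ((i:ℕ):ℝ)/n = 1/n := by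
      push_cast; field_simp; ring
    rw [e1, abs_of_pos (by positivity)]
  set D : Fin n → Set Ω := fun i => blockF B (0 + ((i:ℕ):ℝ)*(1/(n:ℝ))) (1/(n:ℝ)) (ε/2) (dd i)
    (ε/(8*n)) with hD
  have hpos : ∀ i : Fin n, 0 < P (D i) := by
    intro i
    apply blockF_pos hB (by positivity) (by positivity) (by linarith) ?_ (by positivity)
    calc |dd i| ≤ ε/8 := hddb i
      _ = (ε/2)/4 := by ring
  have hprod : ∏ i : Fin n, P (D i) ≤ P (⋂ i : Fin n, D i) :=
    blocks_prod hB 0 (1/(n:ℝ)) le_rfl (by positivity) n (fun _ => ε/2) dd (fun _ => ε/(8*n))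
  have hincl : (⋂ i : Fin n, D i) ⊆ {ω | ∀ t ∈ Set.Icc (0:ℝ) 1, |B t ω - f t| < ε} := by
    intro ω hω
    simp only [Set.mem_iInter] at hω
    have hB0 : B 0 ω = 0 := hB.start ω
    have hsum : ∀ i : ℕ, i ≤ n →
        |B ((i:ℝ)*(1/(n:ℝ))) ω - f ((i:ℝ)/n)| ≤ (i:ℝ)*(ε/(8*n)) := by
      intro i
      induction i with
      | zero =>
        intro _
        simp only [Nat.cast_zero, zero_mul, zero_div]
        rw [hB0, hf0]
        simp
      | succ i ih =>
        intro him
        have hi : i < n := by omega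
        have h1 := ih (by omega)
        have h2 := (hω ⟨i, hi⟩).2
        have ea : (0:ℝ) + (((⟨i, hi⟩ : Fin n) : ℕ):ℝ)*(1/(n:ℝ)) = (i:ℝ)*(1/(n:ℝ)) := by
          show (0:ℝ) + (i:ℝ)*(1/(n:ℝ)) = (i:ℝ)*(1/(n:ℝ))
          ring
        have eb : (0:ℝ) + (((⟨i, hi⟩ : Fin n) : ℕ):ℝ)*(1/(n:ℝ)) + 1/(n:ℝ)
            = ((i+1:ℕ):ℝ)*(1/(n:ℝ)) := by
          show (0:ℝ) + (i:ℝ)*(1/(n:ℝ)) + 1/(n:ℝ) = ((i+1:ℕ):ℝ)*(1/(n:ℝ))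
          push_cast; ring
        rw [eb, ea] at h2
        have hddi : dd ⟨i, hi⟩ = f (((i+1:ℕ):ℝ)/n) - f ((i:ℝ)/n) := rfl
        rw [hddi] at h2
        have hdecomp : B (((i+1:ℕ):ℝ)*(1/(n:ℝ))) ω - f (((i+1:ℕ):ℝ)/n)
            = (B ((i:ℝ)*(1/(n:ℝ))) ω - f ((i:ℝ)/n))
              + (B (((i+1:ℕ):ℝ)*(1/(n:ℝ))) ω - B ((i:ℝ)*(1/(n:ℝ))) ω
                - (f (((i+1:ℕ):ℝ)/n) - f ((i:ℝ)/n))) := by ring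
        calc |B (((i+1:ℕ):ℝ)*(1/(n:ℝ))) ω - f (((i+1:ℕ):ℝ)/n)|
            = |(B ((i:ℝ)*(1/(n:ℝ))) ω - f ((i:ℝ)/n))
              + (B (((i+1:ℕ):ℝ)*(1/(n:ℝ))) ω - B ((i:ℝ)*(1/(n:ℝ))) ω
                - (f (((i+1:ℕ):ℝ)/n) - f ((i:ℝ)/n)))| := by rw [hdecomp]
          _ ≤ |B ((i:ℝ)*(1/(n:ℝ))) ω - f ((i:ℝ)/n)|
              + |B (((i+1:ℕ):ℝ)*(1/(n:ℝ))) ω - B ((i:ℝ)*(1/(n:ℝ))) ω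
                - (f (((i+1:ℕ):ℝ)/n) - f ((i:ℝ)/n))| := abs_add_le _ _
          _ ≤ (i:ℝ)*(ε/(8*n)) + ε/(8*n) := add_le_add h1 h2
          _ = ((i+1:ℕ):ℝ)*(ε/(8*n)) := by push_cast; ring
    intro t ht
    have ht' : t ∈ Set.Icc (0:ℝ) ((0:ℝ) + 1) := by
      rwa [show (0:ℝ) + 1 = 1 by ring]
    obtain ⟨j, hj, hmem⟩ := mem_subblock one_pos hn ht'
    have hblock := (hω ⟨j, hj⟩).1 t hmem
    have ea : (0:ℝ) + (((⟨j, hj⟩ : Fin n) : ℕ):ℝ)*(1/(n:ℝ)) = (j:ℝ)*(1/(n:ℝ)) := by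
      show (0:ℝ) + (j:ℝ)*(1/(n:ℝ)) = (j:ℝ)*(1/(n:ℝ))
      ring
    rw [ea] at hblock
    have hsumj := hsum j (le_of_lt hj)
    have hjR : (j:ℝ) ≤ n := by exact_mod_cast le_of_lt hj
    have hb1 : (j:ℝ)*(ε/(8*n)) ≤ ε/8 := by
      have e2 : (n:ℝ)*(ε/(8*n)) = ε/8 := by field_simp
      have e3 : (j:ℝ)*(ε/(8*n)) ≤ (n:ℝ)*(ε/(8*n)) :=
        mul_le_mul_of_nonneg_right hjR (by positivity)
      linarith
    have hfc : |f ((j:ℝ)/n) - f t| ≤ ε/8 := by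
      apply hfclose _ _ (hpt j (le_of_lt hj)) ht
      obtain ⟨hm1, hm2⟩ := hmem
      have e4 : (j:ℝ)/n = (j:ℝ)*(1/(n:ℝ)) := by ring
      rw [abs_le]
      constructor
      · rw [e4]; simp only [zero_add] at hm1 hm2; linarith
      · rw [e4]; simp only [zero_add] at hm1 hm2; linarith
    calc |B t ω - f t|
        = |(B t ω - B ((j:ℝ)*(1/(n:ℝ))) ω) + (B ((j:ℝ)*(1/(n:ℝ))) ω - f ((j:ℝ)/n))
            + (f ((j:ℝ)/n) - f t)| := by congr 1; ring
      _ ≤ |(B t ω - B ((j:ℝ)*(1/(n:ℝ))) ω) + (B ((j:ℝ)*(1/(n:ℝ))) ω - f ((j:ℝ)/n))|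
            + |f ((j:ℝ)/n) - f t| := abs_add_le _ _
      _ ≤ |B t ω - B ((j:ℝ)*(1/(n:ℝ))) ω| + |B ((j:ℝ)*(1/(n:ℝ))) ω - f ((j:ℝ)/n)|
            + |f ((j:ℝ)/n) - f t| := by
          apply add_le_add_left (abs_add_le _ _)
      _ ≤ ε/2 + ε/8 + ε/8 := by
          apply add_le_add (add_le_add hblock (le_trans hsumj hb1)) hfc
      _ < ε := by linarith
  calc (0:ℝ≥0∞) < ∏ i : Fin n, P (D i) := by
        rw [CanonicallyOrderedAdd.prod_pos]
        exact fun i _ => hpos i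
    _ ≤ P (⋂ i : Fin n, D i) := hprod
    _ ≤ P {ω | ∀ t ∈ Set.Icc (0:ℝ) 1, |B t ω - f t| < ε} := measure_mono hincl
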